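/- Suppose W : ℝ₊ → ℝ is continuous with W(s) ≥ 0 for all s ≥ 0, W(0) > 0, and there exists s̄ > 0 with W(s̄) = 0. Let u : ℝ³ → ℝ₊ be continuous with ∫_{ℝ³} W(u(x)) dx < ∞ and let A ∈ D^{1,2}(ℝ³, ℝ³) satisfy ∫_{ℝ³} |ℓ∇θ - qA|² dx < ∞ for some nonzero integer ℓ and q ∈ ℝ. If u(x) → s̄ as |x| → ∞, then ∫_{ℝ³} |A|⁶ dx = ∞; in particular no such configuration has finite energy. -/

import Mathlib

open MeasureTheory Real Filter Topology

noncomputable section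

abbrev V3 := Fin 3 → ℝ

def gradTheta (x : V3) : V3 :=
  ![x 1 / (x 0 ^ 2 + x 1 ^ 2), -(x 0) / (x 0 ^ 2 + x 1 ^ 2), 0]

/-- Elementary: `t ≤ t³/ε² + ε` for `t ≥ 0`, `ε > 0`. -/
lemma aux_cube_bound (t e : ℝ) (ht : 0 ≤ t) (he : 0 < e) : t ≤ t ^ 3 / e ^ 2 + e := by
  rcases le_or_gt t e with h | h
  · have : 0 ≤ t ^ 3 / e ^ 2 := by positivity
    linarith
  · have : t ≤ t ^ 3 / e ^ 2 := by
      rw [le_div_iff₀ (by positivity)]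
      nlinarith [mul_nonneg (mul_nonneg ht (by linarith : (0:ℝ) ≤ t - e))
        (by linarith : (0:ℝ) ≤ t + e)]
    linarith

/-- Lower bound for `|ℓ∇θ|²` on the box `[1,2] × [0,1] × ℝ`. -/
lemma aux_gradTheta_lb (l : ℝ) (x : V3) (h0 : 1 ≤ x 0) (h0' : x 0 ≤ 2)
    (h1 : 0 ≤ x 1) (h1' : x 1 ≤ 1) :
    l ^ 2 / 5 ≤ ∑ i : Fin 3, (l * gradTheta x i) ^ 2 := by
  have hr1 : 1 ≤ x 0 ^ 2 + x 1 ^ 2 := by nlinarith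
  have hr5 : x 0 ^ 2 + x 1 ^ 2 ≤ 5 := by nlinarith
  have hrpos : 0 < x 0 ^ 2 + x 1 ^ 2 := by linarith
  simp only [gradTheta, Fin.sum_univ_three, Matrix.cons_val_zero, Matrix.cons_val_one,
    Matrix.head_cons, Matrix.cons_val_two, Matrix.tail_cons]
  have key : (l * (x 1 / (x 0 ^ 2 + x 1 ^ 2))) ^ 2
      + (l * (-x 0 / (x 0 ^ 2 + x 1 ^ 2))) ^ 2 + (l * 0) ^ 2
      = l ^ 2 / (x 0 ^ 2 + x 1 ^ 2) := by
    field_simp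
    ring
  rw [key]
  exact div_le_div_of_nonneg_left (sq_nonneg l) hrpos hr5

/-- Nonexistence of vortices for positive double-well `W`: if `W ≥ 0`, `W(0) > 0`,
`W(s̄) = 0`, `u → s̄` at infinity, `∫ W(u) < ∞`, and `∫ |ℓ∇θ - qA|² < ∞` with `ℓ ≠ 0`,
then `∫ |A|⁶ = ∞`; in particular no such configuration has finite energy. -/
theorem no_finite_energy_vortex_double_well
    (W : ℝ → ℝ) (sbar : ℝ) (u : V3 → ℝ) (A : V3 → V3) (ℓ : ℤ) (q : ℝ)
    (hWc : Continuous W) (hW1 : ∀ s : ℝ, 0 ≤ s → 0 ≤ W s) (hW2 : 0 < W 0)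
    (hsbar : 0 < sbar) (hW3 : W sbar = 0)
    (hu : Continuous u) (hupos : ∀ x, 0 ≤ u x)
    (hWu : Integrable (fun x => W (u x)))
    (hl : ℓ ≠ 0)
    (hAmeas : ∀ i, Measurable fun x => A x i)
    (hK : Integrable
      (fun x : V3 => ∑ i : Fin 3, ((ℓ : ℝ) * gradTheta x i - q * A x i) ^ 2))
    (hlim : Tendsto u (Filter.cocompact V3) (nhds sbar)) :
    ¬ Integrable (fun x : V3 => (∑ i : Fin 3, (A x i) ^ 2) ^ 3) := by
  intro hInt
  have hlr : ((ℓ : ℝ)) ≠ 0 := Int.cast_ne_zero.2 hl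
  set c : ℝ := (ℓ : ℝ) ^ 2 / 5 with hc
  have hcpos : 0 < c := by positivity
  set ε : ℝ := c / (2 * (2 * q ^ 2 + 1)) with he
  have hepos : 0 < ε := by positivity
  have heq : 2 * q ^ 2 * ε ≤ c / 2 := by
    have h21 : (0:ℝ) < 2 * (2 * q ^ 2 + 1) := by positivity
    rw [he, ← mul_div_assoc, div_le_div_iff₀ h21 two_pos]
    nlinarith [mul_nonneg (sq_nonneg q) hcpos.le]
  -- the boxes
  set B : ℕ → Set V3 := fun n => Set.Icc ![1, 0, 2 * (n : ℝ)] ![2, 1, 2 * n + 1] with hB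
  have hBm : ∀ n, MeasurableSet (B n) := fun n => measurableSet_Icc
  have hBvol : ∀ n, volume (B n) = 1 := by
    intro n
    rw [hB]
    rw [Real.volume_Icc_pi, Fin.prod_univ_three]
    norm_num
    show (2 * (n:ℝ) + 1) - 2 * n = 1
    ring
  have hBd : Pairwise (Function.onFun Disjoint B) := by
    intro m n hmn
    rw [Function.onFun, Set.disjoint_left]
    intro x hxm hxn
    have h1 : 2 * (m : ℝ) ≤ x 2 := by have := hxm.1 2; simpa using this
    have h2 : x 2 ≤ 2 * (m : ℝ) + 1 := by have := hxm.2 2; simpa using this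
    have h3 : 2 * (n : ℝ) ≤ x 2 := by have := hxn.1 2; simpa using this
    have h4 : x 2 ≤ 2 * (n : ℝ) + 1 := by have := hxn.2 2; simpa using this
    have hmn1 : 2 * m ≤ 2 * n + 1 := by
      have : 2 * (m : ℝ) ≤ 2 * (n : ℝ) + 1 := by linarith
      exact_mod_cast this
    have hmn2 : 2 * n ≤ 2 * m + 1 := by
      have : 2 * (n : ℝ) ≤ 2 * (m : ℝ) + 1 := by linarith
      exact_mod_cast this
    omega
  -- functions
  set f : V3 → ℝ := fun x => ∑ i : Fin 3, ((ℓ : ℝ) * gradTheta x i - q * A x i) ^ 2 with hf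
  set g : V3 → ℝ := fun x => ∑ i : Fin 3, (A x i) ^ 2 with hg
  have hg3Int : Integrable (fun x : V3 => (g x) ^ 3) := hInt
  have hgmeas : Measurable g := Finset.measurable_sum _ fun i _ => (hAmeas i).pow_const 2
  have hgnn : ∀ x, 0 ≤ g x := fun x => Finset.sum_nonneg fun i _ => sq_nonneg _
  have hBfin : ∀ n, volume (B n) < ⊤ := fun n => by
    rw [hBvol n]; exact ENNReal.one_lt_top
  have hvol1 : ∀ n, (volume (B n)).toReal = 1 := fun n => by rw [hBvol n]; simp
  -- g is integrable on each box, dominated by g³/ε² + ε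
  have hgInt : ∀ n, IntegrableOn g (B n) := by
    intro n
    have hdom : IntegrableOn (fun x => (g x) ^ 3 / ε ^ 2 + ε) (B n) :=
      (hg3Int.integrableOn.div_const _).add (integrableOn_const (hBfin n).ne)
    refine hdom.mono' hgmeas.aestronglyMeasurable ?_
    filter_upwards with x
    rw [Real.norm_eq_abs, abs_of_nonneg (hgnn x)]
    exact aux_cube_bound _ _ (hgnn x) hepos
  set F : ℕ → ℝ := fun n => ∫ x in B n, f x with hF
  set G : ℕ → ℝ := fun n => ∫ x in B n, (g x) ^ 3 with hG
  have hFt : Tendsto F atTop (nhds 0) :=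
    (hasSum_integral_iUnion hBm hBd hK.integrableOn).summable.tendsto_atTop_zero
  have hGt : Tendsto G atTop (nhds 0) :=
    (hasSum_integral_iUnion hBm hBd hg3Int.integrableOn).summable.tendsto_atTop_zero
  -- the main estimate on each box
  have hmain : ∀ n, c / 2 ≤ 2 * F n + (2 * q ^ 2 / ε ^ 2) * G n := by
    intro n
    have hint1 : IntegrableOn (fun x => 2 * f x + 2 * q ^ 2 * g x) (B n) :=
      (hK.integrableOn.const_mul 2).add ((hgInt n).const_mul _)
    have step1 : c ≤ ∫ x in B n, (2 * f x + 2 * q ^ 2 * g x) := by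
      have hmono := setIntegral_mono_on
        (integrableOn_const (hBfin n).ne : IntegrableOn (fun _ => c) (B n) volume)
        hint1 (hBm n) ?_
      · rwa [setIntegral_const, measureReal_def, hvol1 n, one_smul] at hmono
      · intro x hx
        have hx' : x ∈ Set.Icc ![1, 0, 2 * (n : ℝ)] ![2, 1, 2 * n + 1] := hx
        have h0 : 1 ≤ x 0 := by have := hx'.1 0; simpa using this
        have h0' : x 0 ≤ 2 := by have := hx'.2 0; simpa using this
        have h1 : 0 ≤ x 1 := by have := hx'.1 1; simpa using this
        have h1' : x 1 ≤ 1 := by have := hx'.2 1; simpa using this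
        calc c ≤ ∑ i : Fin 3, ((ℓ : ℝ) * gradTheta x i) ^ 2 :=
              aux_gradTheta_lb _ x h0 h0' h1 h1'
          _ ≤ ∑ i : Fin 3, (2 * ((ℓ : ℝ) * gradTheta x i - q * A x i) ^ 2
                + 2 * q ^ 2 * (A x i) ^ 2) := by
              refine Finset.sum_le_sum fun i _ => ?_
              nlinarith [sq_nonneg ((ℓ : ℝ) * gradTheta x i - 2 * (q * A x i))]
          _ = 2 * f x + 2 * q ^ 2 * g x := by
              rw [hf, hg, Finset.sum_add_distrib, ← Finset.mul_sum, ← Finset.mul_sum]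
    rw [integral_add (hK.integrableOn.const_mul 2) ((hgInt n).const_mul _),
      integral_const_mul, integral_const_mul] at step1
    have step3 : ∫ x in B n, g x ≤ G n / ε ^ 2 + ε := by
      have hRHS : IntegrableOn (fun x => (g x) ^ 3 / ε ^ 2 + ε) (B n) :=
        (hg3Int.integrableOn.div_const _).add (integrableOn_const (hBfin n).ne)
      have hmono := setIntegral_mono_on (hgInt n) hRHS (hBm n)
        (fun x _ => aux_cube_bound _ _ (hgnn x) hepos)
      rwa [integral_add (hg3Int.integrableOn.div_const _)
        (integrableOn_const (hBfin n).ne), integral_div, setIntegral_const, measureReal_def,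
        hvol1 n, one_smul] at hmono
    have hq2 : (0:ℝ) ≤ 2 * q ^ 2 := by positivity
    have h4 := mul_le_mul_of_nonneg_left step3 hq2
    have hring : 2 * q ^ 2 * (G n / ε ^ 2 + ε)
        = (2 * q ^ 2 / ε ^ 2) * G n + 2 * q ^ 2 * ε := by ring
    rw [hring] at h4
    linarith
  have hH : Tendsto (fun n => 2 * F n + (2 * q ^ 2 / ε ^ 2) * G n) atTop (nhds 0) := by
    have := (hFt.const_mul 2).add (hGt.const_mul (2 * q ^ 2 / ε ^ 2))
    simpa using this
  obtain ⟨n, hn⟩ := (hH.eventually_lt_const (by linarith : (0:ℝ) < c / 2)).exists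
  exact absurd (hmain n) (not_le.2 hn)
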